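/- Let X and Y be jointly distributed finite random variables with Y ranging over a finite set 𝒴. Assume X is ε-close in statistical distance to some distribution with min-entropy k. Then for any ε' > 0, with probability at least 1 − ε' − ε/ε' over y ← Y, the conditional distribution X|Y=y is ε'-close to a distribution with min-entropy at least k − log|𝒴| − log(1/ε'). -/

import Mathlib

open Finset


lemma redistribute {α : Type*} [Fintype α] (r : α → ℝ) (M ε' : ℝ)
    (hr0 : ∀ x, 0 ≤ r x) (hr1 : ∑ x, r x = 1)
    (hM : 1 < M * Fintype.card α)
    (he : ∑ x, max (r x - M) 0 ≤ ε') :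
    ∃ q' : α → ℝ, (∀ x, 0 ≤ q' x) ∧ (∑ x, q' x = 1) ∧ (∀ x, q' x ≤ M) ∧
      (1/2) * ∑ x, |r x - q' x| ≤ ε' := by
  have hM0 : 0 < M := by
    by_contra h
    push_neg at h
    have : M * Fintype.card α ≤ 0 := mul_nonpos_of_nonpos_of_nonneg h (by positivity)
    linarith
  set e := ∑ x, max (r x - M) 0 with he_def
  have he0 : 0 ≤ e := Finset.sum_nonneg fun x _ => le_max_right _ _
  set q'' : α → ℝ := fun x => min (r x) M with hq''
  have hmin : ∀ x, q'' x = r x - max (r x - M) 0 := by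
    intro x
    rcases le_total (r x) M with h | h
    · simp [hq'', min_eq_left h, max_eq_right (by linarith : r x - M ≤ 0)]
    · simp only [hq'', min_eq_right h, max_eq_left (by linarith : (0:ℝ) ≤ r x - M)]
      ring
  have hq''sum : ∑ x, q'' x = 1 - e := by
    simp only [hmin]
    rw [Finset.sum_sub_distrib, hr1]
  set D := M * Fintype.card α - (1 - e) with hD
  have hD0 : 0 < D := by nlinarith
  have heD : e ≤ D := by nlinarith
  have hsumMq : ∑ x, (M - q'' x) = D := by
    rw [Finset.sum_sub_distrib, hq''sum, Finset.sum_const, Finset.card_univ, hD]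
    simp [mul_comm]
  have hq''le : ∀ x, q'' x ≤ M := fun x => min_le_right _ _
  have hq''0 : ∀ x, 0 ≤ q'' x := fun x => le_min (hr0 x) hM0.le
  refine ⟨fun x => q'' x + (e / D) * (M - q'' x), ?_, ?_, ?_, ?_⟩
  · intro x
    have : 0 ≤ (e / D) * (M - q'' x) := by
      apply mul_nonneg (div_nonneg he0 hD0.le)
      linarith [hq''le x]
    linarith [hq''0 x]
  · rw [Finset.sum_add_distrib, ← Finset.mul_sum, hsumMq, hq''sum]
    field_simp
    ring
  · intro x
    have h1 : e / D ≤ 1 := (div_le_one hD0).mpr heD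
    nlinarith [hq''le x, hq''0 x, div_nonneg he0 hD0.le]
  · have key : ∀ x, |r x - (q'' x + (e / D) * (M - q'' x))| ≤
        max (r x - M) 0 + (e / D) * (M - q'' x) := by
      intro x
      have h1 : r x - q'' x = max (r x - M) 0 := by rw [hmin x]; ring
      have h2 : 0 ≤ (e / D) * (M - q'' x) := by
        apply mul_nonneg (div_nonneg he0 hD0.le); linarith [hq''le x]
      calc |r x - (q'' x + (e / D) * (M - q'' x))|
          = |(r x - q'' x) - (e / D) * (M - q'' x)| := by ring_nf
        _ ≤ |r x - q'' x| + |(e / D) * (M - q'' x)| := abs_sub _ _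
        _ = max (r x - M) 0 + (e / D) * (M - q'' x) := by
            rw [h1, abs_of_nonneg (le_max_right _ _), abs_of_nonneg h2]
    have hsum : ∑ x, |r x - (q'' x + (e / D) * (M - q'' x))| ≤ e + (e / D) * D := by
      calc ∑ x, |r x - (q'' x + (e / D) * (M - q'' x))|
          ≤ ∑ x, (max (r x - M) 0 + (e / D) * (M - q'' x)) :=
            Finset.sum_le_sum fun x _ => key x
        _ = e + (e / D) * D := by
            rw [Finset.sum_add_distrib, ← Finset.mul_sum, hsumMq]
    have hDD : e / D * D = e := div_mul_cancel₀ e hD0.ne'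
    rw [hDD] at hsum
    linarith

open scoped Classical in
lemma main_aux {α β : Type*} [Fintype α] [Fintype β]
    (p : α × β → ℝ) (hp0 : ∀ z, 0 ≤ p z) (hp1 : ∑ z, p z = 1)
    (q : α → ℝ) (hq0 : ∀ x, 0 ≤ q x) (hq1 : ∑ x, q x = 1)
    (T ε : ℝ) (hqT : ∀ x, q x ≤ T)
    (hqε : (1/2) * ∑ x, |(∑ y, p (x, y)) - q x| ≤ ε)
    (ε' : ℝ) (hε' : 0 < ε') (hε'1 : ε' < 1) (hε0 : 0 ≤ ε)
    (hβ : 0 < Fintype.card β)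
    (M : ℝ) (hM : M = T * (Fintype.card β : ℝ) / ε') :
    ∑ y ∈ univ.filter (fun y : β => ∃ q' : α → ℝ,
        (∀ x, 0 ≤ q' x) ∧ (∑ x, q' x = 1) ∧
        (∀ x, q' x ≤ M) ∧
        (1/2) * ∑ x, |p (x, y) - q' x * (∑ x' : α, p (x', y))| ≤ ε' * (∑ x' : α, p (x', y))),
      (∑ x : α, p (x, y)) ≥ 1 - ε' - ε/ε' := by
  have hα : 0 < Fintype.card α := by
    rcases Nat.eq_zero_or_pos (Fintype.card α) with h | h
    · haveI := Fintype.card_eq_zero_iff.mp h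
      rw [Finset.univ_eq_empty] at hq1
      simp at hq1
    · exact h
  have hT0 : 0 < T := by
    by_contra hc
    push_neg at hc
    have : ∑ x, q x ≤ 0 := Finset.sum_nonpos fun x _ => (hqT x).trans hc
    linarith
  have hB' : (0:ℝ) < (Fintype.card β : ℝ) := by exact_mod_cast hβ
  have hB'1 : (1:ℝ) ≤ (Fintype.card β : ℝ) := by exact_mod_cast hβ
  have hTα : 1 ≤ T * (Fintype.card α : ℝ) := by
    calc (1:ℝ) = ∑ x, q x := hq1.symm
      _ ≤ ∑ _x : α, T := Finset.sum_le_sum fun x _ => hqT x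
      _ = T * (Fintype.card α : ℝ) := by
          rw [Finset.sum_const, Finset.card_univ, nsmul_eq_mul, mul_comm]
  have hM0 : 0 < M := by rw [hM]; positivity
  have hMα : 1 < M * (Fintype.card α : ℝ) := by
    rw [hM, div_mul_eq_mul_div, lt_div_iff₀ hε', one_mul]
    nlinarith [mul_le_mul_of_nonneg_right hTα hB'.le]
  have hW0 : ∀ y : β, 0 ≤ ∑ x : α, p (x, y) :=
    fun y => Finset.sum_nonneg fun x _ => hp0 _
  have hW1 : ∑ y : β, ∑ x : α, p (x, y) = 1 := by
    rw [Finset.sum_comm, ← Fintype.sum_prod_type]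
    exact hp1
  set Good : β → Prop := fun y => ∃ q' : α → ℝ,
        (∀ x, 0 ≤ q' x) ∧ (∑ x, q' x = 1) ∧
        (∀ x, q' x ≤ M) ∧
        (1/2) * ∑ x, |p (x, y) - q' x * (∑ x' : α, p (x', y))| ≤ ε' * (∑ x' : α, p (x', y))
    with hGood
  -- goodness criterion
  have hgood : ∀ y : β, ε' / (Fintype.card β : ℝ) ≤ ∑ x : α, p (x, y) →
      (∑ x : α, max (p (x, y) - M * ∑ x' : α, p (x', y)) 0) ≤ ε' * ∑ x' : α, p (x', y) →
      Good y := by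
    intro y hheavy hE
    have hWy : 0 < ∑ x : α, p (x, y) := lt_of_lt_of_le (by positivity) hheavy
    obtain ⟨q', h0, h1, hle, hcl⟩ := redistribute (fun x => p (x, y) / ∑ x' : α, p (x', y)) M ε'
      (fun x => div_nonneg (hp0 _) hWy.le)
      (by rw [← Finset.sum_div, div_self hWy.ne'])
      hMα
      (by
        have heq : ∀ x : α, max (p (x, y) / (∑ x' : α, p (x', y)) - M) 0
            = max (p (x, y) - M * ∑ x' : α, p (x', y)) 0 / (∑ x' : α, p (x', y)) := by
          intro x
          have h1 : p (x, y) / (∑ x' : α, p (x', y)) - M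
              = (p (x, y) - M * ∑ x' : α, p (x', y)) / (∑ x' : α, p (x', y)) := by
            field_simp
          calc max (p (x, y) / (∑ x' : α, p (x', y)) - M) 0
              = max ((p (x, y) - M * ∑ x' : α, p (x', y)) / (∑ x' : α, p (x', y)))
                ((0:ℝ) / (∑ x' : α, p (x', y))) := by rw [h1, zero_div]
            _ = max (p (x, y) - M * ∑ x' : α, p (x', y)) 0 / (∑ x' : α, p (x', y)) :=
                max_div_div_right hWy.le _ _
        simp only [heq]
        rw [← Finset.sum_div, div_le_iff₀ hWy]
        calc (∑ x : α, max (p (x, y) - M * ∑ x' : α, p (x', y)) 0)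
            ≤ ε' * ∑ x' : α, p (x', y) := hE
          _ = ε' * ∑ x' : α, p (x', y) := rfl)
    simp only [hGood]
    refine ⟨q', h0, h1, hle, ?_⟩
    have habs : ∀ x : α, |p (x, y) - q' x * (∑ x' : α, p (x', y))|
        = |p (x, y) / (∑ x' : α, p (x', y)) - q' x| * (∑ x' : α, p (x', y)) := by
      intro x
      rw [show p (x, y) - q' x * (∑ x' : α, p (x', y))
          = (p (x, y) / (∑ x' : α, p (x', y)) - q' x) * (∑ x' : α, p (x', y)) by field_simp,
        abs_mul, abs_of_pos hWy]
    simp only [habs]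
    calc (1/2) * ∑ x, |p (x, y) / (∑ x' : α, p (x', y)) - q' x| * (∑ x' : α, p (x', y))
        = ((1/2) * ∑ x, |p (x, y) / (∑ x' : α, p (x', y)) - q' x|) * (∑ x' : α, p (x', y)) := by
          rw [← Finset.sum_mul]; ring
      _ ≤ ε' * (∑ x' : α, p (x', y)) := mul_le_mul_of_nonneg_right hcl hWy.le
  -- bound on total excess over heavy y
  have hg : ∑ x : α, max ((∑ y, p (x, y)) - T) 0 ≤ ε := by
    have hX1 : ∑ x : α, ∑ y : β, p (x, y) = 1 := by
      rw [← Fintype.sum_prod_type]; exact hp1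
    have hzero : ∑ x : α, ((∑ y, p (x, y)) - q x) = 0 := by
      rw [Finset.sum_sub_distrib, hX1, hq1]; ring
    have hmax : ∀ a : ℝ, max a 0 = (a + |a|) / 2 := by
      intro a
      rcases le_or_gt 0 a with h | h
      · rw [max_eq_left h, abs_of_nonneg h]; ring
      · rw [max_eq_right h.le, abs_of_neg h]; ring
    have habs : ∑ x : α, max ((∑ y, p (x, y)) - q x) 0
        = (1/2) * ∑ x, |(∑ y, p (x, y)) - q x| := by
      simp only [hmax]
      rw [← Finset.sum_div, Finset.sum_add_distrib, hzero, zero_add]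
      ring
    calc ∑ x : α, max ((∑ y, p (x, y)) - T) 0
        ≤ ∑ x : α, max ((∑ y, p (x, y)) - q x) 0 :=
          Finset.sum_le_sum fun x _ => max_le_max (by linarith [hqT x]) le_rfl
      _ = (1/2) * ∑ x, |(∑ y, p (x, y)) - q x| := habs
      _ ≤ ε := hqε
  have hkey : ∑ y ∈ univ.filter (fun y : β => ε' / (Fintype.card β : ℝ) ≤ ∑ x : α, p (x, y)),
      (∑ x : α, max (p (x, y) - M * ∑ x' : α, p (x', y)) 0) ≤ ε := by
    set r : α → β → ℝ := fun x y =>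
      if (∑ y', p (x, y')) = 0 then 0 else p (x, y) / (∑ y', p (x, y')) with hrdef
    have hr0 : ∀ x y, 0 ≤ r x y := by
      intro x y
      simp only [hrdef]
      split
      · exact le_refl _
      · exact div_nonneg (hp0 _) (Finset.sum_nonneg fun _ _ => hp0 _)
    have hrsum : ∀ x, ∑ y, r x y ≤ 1 := by
      intro x
      simp only [hrdef]
      by_cases h : (∑ y', p (x, y')) = 0
      · simp [h]
      · simp only [h, if_false]
        rw [← Finset.sum_div, div_self h]
    have hpw : ∀ y : β, ε' / (Fintype.card β : ℝ) ≤ ∑ x : α, p (x, y) → ∀ x : α,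
        max (p (x, y) - M * ∑ x' : α, p (x', y)) 0
          ≤ (max ((∑ y', p (x, y')) - T) 0) * r x y := by
      intro y hy x
      have hMW : T ≤ M * ∑ x' : α, p (x', y) := by
        have h1 : M * (ε' / (Fintype.card β : ℝ)) = T := by
          rw [hM]; field_simp
        calc T = M * (ε' / (Fintype.card β : ℝ)) := h1.symm
          _ ≤ M * ∑ x' : α, p (x', y) := mul_le_mul_of_nonneg_left hy hM0.le
      by_cases hX : (∑ y', p (x, y')) = 0
      · have hpxy : p (x, y) = 0 := by
          have h1 : p (x, y) ≤ ∑ y', p (x, y') :=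
            Finset.single_le_sum (fun y' _ => hp0 (x, y')) (Finset.mem_univ y)
          have h2 := hp0 (x, y)
          rw [hX] at h1
          linarith
        have hr : r x y = 0 := by simp only [hrdef]; rw [if_pos hX]
        rw [hr, mul_zero, hpxy, zero_sub, max_eq_right (by nlinarith : -(M * ∑ x' : α, p (x', y)) ≤ 0)]
      · have hXpos : 0 < ∑ y', p (x, y') :=
          lt_of_le_of_ne (Finset.sum_nonneg fun _ _ => hp0 _) (Ne.symm hX)
        have hrval : r x y = p (x, y) / ∑ y', p (x, y') := by
          simp only [hrdef]; rw [if_neg hX]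
        have hr1 : r x y ≤ 1 := by
          rw [hrval]
          exact div_le_one_of_le₀
            (Finset.single_le_sum (fun y' _ => hp0 (x, y')) (Finset.mem_univ y)) hXpos.le
        have hrxy0 : 0 ≤ r x y := hr0 x y
        have hpeq : p (x, y) = r x y * ∑ y', p (x, y') := by
          rw [hrval]; field_simp
        apply max_le
        · have hgx : (∑ y', p (x, y')) - T ≤ max ((∑ y', p (x, y')) - T) 0 := le_max_left _ _
          have hgx0 : 0 ≤ max ((∑ y', p (x, y')) - T) 0 := le_max_right _ _
          nlinarith [mul_le_mul_of_nonneg_left hgx hrxy0,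
            mul_nonneg (sub_nonneg.mpr hr1) hT0.le]
        · exact mul_nonneg (le_max_right _ _) hrxy0
    calc ∑ y ∈ univ.filter (fun y : β => ε' / (Fintype.card β : ℝ) ≤ ∑ x : α, p (x, y)),
          (∑ x : α, max (p (x, y) - M * ∑ x' : α, p (x', y)) 0)
        ≤ ∑ y ∈ univ.filter (fun y : β => ε' / (Fintype.card β : ℝ) ≤ ∑ x : α, p (x, y)),
          (∑ x : α, (max ((∑ y', p (x, y')) - T) 0) * r x y) :=
          Finset.sum_le_sum fun y hy =>
            Finset.sum_le_sum fun x _ => hpw y (Finset.mem_filter.mp hy).2 x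
      _ = ∑ x : α, ∑ y ∈ univ.filter (fun y : β => ε' / (Fintype.card β : ℝ) ≤ ∑ x : α, p (x, y)),
          (max ((∑ y', p (x, y')) - T) 0) * r x y := Finset.sum_comm
      _ = ∑ x : α, (max ((∑ y', p (x, y')) - T) 0) *
          ∑ y ∈ univ.filter (fun y : β => ε' / (Fintype.card β : ℝ) ≤ ∑ x : α, p (x, y)), r x y :=
          Finset.sum_congr rfl fun x _ => (Finset.mul_sum _ _ _).symm
      _ ≤ ∑ x : α, (max ((∑ y', p (x, y')) - T) 0) * 1 := by
          refine Finset.sum_le_sum fun x _ => mul_le_mul_of_nonneg_left ?_ (le_max_right _ _)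
          calc ∑ y ∈ univ.filter (fun y : β => ε' / (Fintype.card β : ℝ) ≤ ∑ x : α, p (x, y)), r x y
              ≤ ∑ y : β, r x y := Finset.sum_le_sum_of_subset_of_nonneg
                (Finset.filter_subset _ _) fun y _ _ => hr0 x y
            _ ≤ 1 := hrsum x
      _ = ∑ x : α, max ((∑ y', p (x, y')) - T) 0 := by simp
      _ ≤ ε := hg
  -- final assembly
  have hsplit := Finset.sum_filter_add_sum_filter_not (univ : Finset β) Good
    (fun y => ∑ x : α, p (x, y))
  rw [hW1] at hsplit
  have hbad : ∑ y ∈ univ.filter (fun y => ¬ Good y), (∑ x : α, p (x, y)) ≤ ε' + ε / ε' := by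
    have hsub : univ.filter (fun y => ¬ Good y) ⊆
        univ.filter (fun y : β => (∑ x : α, p (x, y)) < ε' / (Fintype.card β : ℝ)) ∪
        univ.filter (fun y : β => ε' / (Fintype.card β : ℝ) ≤ (∑ x : α, p (x, y)) ∧
          ε' * (∑ x : α, p (x, y)) < ∑ x : α, max (p (x, y) - M * ∑ x' : α, p (x', y)) 0) := by
      intro y hy
      rw [Finset.mem_filter] at hy
      rw [Finset.mem_union, Finset.mem_filter, Finset.mem_filter]
      by_cases hlight : (∑ x : α, p (x, y)) < ε' / (Fintype.card β : ℝ)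
      · exact Or.inl ⟨Finset.mem_univ y, hlight⟩
      · push_neg at hlight
        refine Or.inr ⟨Finset.mem_univ y, hlight, ?_⟩
        by_contra hc
        push_neg at hc
        exact hy.2 (hgood y hlight hc)
    have hdisj : Disjoint
        (univ.filter (fun y : β => (∑ x : α, p (x, y)) < ε' / (Fintype.card β : ℝ)))
        (univ.filter (fun y : β => ε' / (Fintype.card β : ℝ) ≤ (∑ x : α, p (x, y)) ∧
          ε' * (∑ x : α, p (x, y)) < ∑ x : α, max (p (x, y) - M * ∑ x' : α, p (x', y)) 0)) := by
      rw [Finset.disjoint_left]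
      intro y h1 h2
      rw [Finset.mem_filter] at h1 h2
      exact absurd h2.2.1 (not_le.mpr h1.2)
    have hlightbd : ∑ y ∈ univ.filter
        (fun y : β => (∑ x : α, p (x, y)) < ε' / (Fintype.card β : ℝ)),
        (∑ x : α, p (x, y)) ≤ ε' := by
      calc ∑ y ∈ univ.filter (fun y : β => (∑ x : α, p (x, y)) < ε' / (Fintype.card β : ℝ)),
            (∑ x : α, p (x, y))
          ≤ ∑ _y ∈ univ.filter (fun y : β => (∑ x : α, p (x, y)) < ε' / (Fintype.card β : ℝ)),
            (ε' / (Fintype.card β : ℝ)) :=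
            Finset.sum_le_sum fun y hy => ((Finset.mem_filter.mp hy).2).le
        _ = ((univ.filter (fun y : β => (∑ x : α, p (x, y)) < ε' / (Fintype.card β : ℝ))).card : ℝ)
            * (ε' / (Fintype.card β : ℝ)) := by
            rw [Finset.sum_const, nsmul_eq_mul]
        _ ≤ (Fintype.card β : ℝ) * (ε' / (Fintype.card β : ℝ)) := by
            apply mul_le_mul_of_nonneg_right _ (by positivity)
            exact_mod_cast (Finset.card_filter_le _ _).trans (le_of_eq Finset.card_univ)
        _ = ε' := by field_simp
    have hexbd : ∑ y ∈ univ.filter (fun y : β => ε' / (Fintype.card β : ℝ) ≤ (∑ x : α, p (x, y)) ∧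
          ε' * (∑ x : α, p (x, y)) < ∑ x : α, max (p (x, y) - M * ∑ x' : α, p (x', y)) 0),
        (∑ x : α, p (x, y)) ≤ ε / ε' := by
      calc ∑ y ∈ univ.filter (fun y : β => ε' / (Fintype.card β : ℝ) ≤ (∑ x : α, p (x, y)) ∧
            ε' * (∑ x : α, p (x, y)) < ∑ x : α, max (p (x, y) - M * ∑ x' : α, p (x', y)) 0),
            (∑ x : α, p (x, y))
          ≤ ∑ y ∈ univ.filter (fun y : β => ε' / (Fintype.card β : ℝ) ≤ (∑ x : α, p (x, y)) ∧
            ε' * (∑ x : α, p (x, y)) < ∑ x : α, max (p (x, y) - M * ∑ x' : α, p (x', y)) 0),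
            ((∑ x : α, max (p (x, y) - M * ∑ x' : α, p (x', y)) 0) / ε') := by
            refine Finset.sum_le_sum fun y hy => ?_
            rw [Finset.mem_filter] at hy
            rw [le_div_iff₀ hε']
            nlinarith [hy.2.2]
        _ = (∑ y ∈ univ.filter (fun y : β => ε' / (Fintype.card β : ℝ) ≤ (∑ x : α, p (x, y)) ∧
            ε' * (∑ x : α, p (x, y)) < ∑ x : α, max (p (x, y) - M * ∑ x' : α, p (x', y)) 0),
            (∑ x : α, max (p (x, y) - M * ∑ x' : α, p (x', y)) 0)) / ε' := by
            rw [← Finset.sum_div]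
        _ ≤ (∑ y ∈ univ.filter (fun y : β => ε' / (Fintype.card β : ℝ) ≤ ∑ x : α, p (x, y)),
            (∑ x : α, max (p (x, y) - M * ∑ x' : α, p (x', y)) 0)) / ε' := by
            apply (div_le_div_iff_of_pos_right hε').mpr
            apply Finset.sum_le_sum_of_subset_of_nonneg
            · intro y hy
              rw [Finset.mem_filter] at hy ⊢
              exact ⟨hy.1, hy.2.1⟩
            · intro y _ _
              exact Finset.sum_nonneg fun x _ => le_max_right _ _
        _ ≤ ε / ε' := (div_le_div_iff_of_pos_right hε').mpr hkey
    calc ∑ y ∈ univ.filter (fun y => ¬ Good y), (∑ x : α, p (x, y))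
        ≤ ∑ y ∈ (univ.filter (fun y : β => (∑ x : α, p (x, y)) < ε' / (Fintype.card β : ℝ)) ∪
          univ.filter (fun y : β => ε' / (Fintype.card β : ℝ) ≤ (∑ x : α, p (x, y)) ∧
          ε' * (∑ x : α, p (x, y)) < ∑ x : α, max (p (x, y) - M * ∑ x' : α, p (x', y)) 0)),
          (∑ x : α, p (x, y)) :=
          Finset.sum_le_sum_of_subset_of_nonneg hsub fun y _ _ => hW0 y
      _ = _ + _ := Finset.sum_union hdisj
      _ ≤ ε' + ε / ε' := add_le_add hlightbd hexbd
  linarith [hsplit, hbad]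

open scoped Classical in
/-- If `(X, Y)` has joint distribution `p` and `X` (the first marginal) is
`ε`-close to some distribution with min-entropy `k`, then for any `ε' > 0`, with probability
at least `1 - ε' - ε/ε'` over `y ← Y`, the conditional distribution `X | Y = y` is
`ε'`-close to a distribution with min-entropy at least `k - log₂|𝒴| - log₂(1/ε')`.
(All statements about the conditional distribution are expressed multiplicatively,
scaled by `Pr[Y = y]`.) -/
theorem conditional_min_entropy_loss_approx
    {α β : Type*} [Fintype α] [Fintype β]
    (p : α × β → ℝ) (hp0 : ∀ z, 0 ≤ p z) (hp1 : ∑ z, p z = 1)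
    (k ε : ℝ)
    (hclose : ∃ q : α → ℝ, (∀ x, 0 ≤ q x) ∧ (∑ x, q x = 1) ∧
      (∀ x, q x ≤ (2:ℝ) ^ (-k)) ∧
      (1/2) * ∑ x, |(∑ y, p (x, y)) - q x| ≤ ε)
    (ε' : ℝ) (hε' : 0 < ε') :
    ∑ y ∈ univ.filter (fun y : β => ∃ q' : α → ℝ,
        (∀ x, 0 ≤ q' x) ∧ (∑ x, q' x = 1) ∧
        (∀ x, q' x ≤ (2:ℝ) ^ (-(k - Real.logb 2 (Fintype.card β) - Real.logb 2 (1/ε')))) ∧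
        (1/2) * ∑ x, |p (x, y) - q' x * (∑ x' : α, p (x', y))| ≤ ε' * (∑ x' : α, p (x', y))),
      (∑ x : α, p (x, y)) ≥ 1 - ε' - ε/ε' := by
  obtain ⟨q, hq0, hq1, hqT, hqε⟩ := hclose
  have hε0 : 0 ≤ ε := le_trans (by positivity) hqε
  by_cases htriv : 1 - ε' - ε / ε' ≤ 0
  · exact le_trans htriv (Finset.sum_nonneg fun y _ => Finset.sum_nonneg fun x _ => hp0 _)
  · push_neg at htriv
    have hε'1 : ε' < 1 := by
      have : 0 ≤ ε / ε' := div_nonneg hε0 hε'.le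
      linarith
    have hβ : 0 < Fintype.card β := by
      rcases Nat.eq_zero_or_pos (Fintype.card β) with h | h
      · haveI : IsEmpty β := Fintype.card_eq_zero_iff.mp h
        haveI : IsEmpty (α × β) := by infer_instance
        rw [Finset.univ_eq_empty] at hp1
        simp at hp1
      · exact h
    have hB' : (0:ℝ) < (Fintype.card β : ℝ) := by exact_mod_cast hβ
    have hMeq : (2:ℝ) ^ (-(k - Real.logb 2 (Fintype.card β) - Real.logb 2 (1/ε')))
        = (2:ℝ) ^ (-k) * (Fintype.card β : ℝ) / ε' := by
      rw [show -(k - Real.logb 2 (Fintype.card β) - Real.logb 2 (1/ε'))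
          = (-k) + Real.logb 2 (Fintype.card β) + Real.logb 2 (1/ε') by ring,
        Real.rpow_add two_pos, Real.rpow_add two_pos,
        Real.rpow_logb two_pos (by norm_num) hB',
        Real.rpow_logb two_pos (by norm_num) (by positivity)]
      field_simp
    simp only [hMeq]
    exact main_aux p hp0 hp1 q hq0 hq1 _ ε hqT hqε ε' hε' hε'1 hε0 hβ _ rfl
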